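/- arXiv:1004.0888 — 2 statements merged into one kernel-verified Lean document; each statement's English description precedes it below -/
import Mathlib

section
/- Let d ≥ 2 and let W₁, …, W_{d²−1} ∈ Matrix (Fin d) (Fin d) ℂ be unitary matrices with Tr(Wⱼ) = 0 for all j and Tr(Wⱼᴴ W_k) = 0 for all j ≠ k. Then for every unit vector ψ ∈ ℂ^d: ∑_{j=1}^{d²−1} |⟨ψ, Wⱼ ψ⟩|² = d − 1. -/
open Matrix Kronecker BigOperators ComplexOrder

noncomputable def traceNorm {n : Type*} [Fintype n] [DecidableEq n] (A : Matrix n n ℂ) : ℝ :=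
  (((Matrix.posSemidef_conjTranspose_mul_self A).1.eigenvectorUnitary.1 *
    diagonal (((↑) : ℝ → ℂ) ∘ (√·) ∘ (Matrix.posSemidef_conjTranspose_mul_self A).1.eigenvalues) *
    (star (Matrix.posSemidef_conjTranspose_mul_self A).1.eigenvectorUnitary : Matrix n n ℂ)).trace).re

def IsDensity {n : Type*} [Fintype n] (ρ : Matrix n n ℂ) : Prop :=
  ρ.PosSemidef ∧ ρ.trace = 1

def tensorId {X Y Z : Type*} (Φ : Matrix X X ℂ → Matrix Y Y ℂ)
    (ρ : Matrix (X × Z) (X × Z) ℂ) : Matrix (Y × Z) (Y × Z) ℂ :=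
  Matrix.of fun p q => Φ (Matrix.of fun x x' => ρ (x, p.2) (x', q.2)) p.1 q.1

noncomputable def ChoiMatrix {X Y : Type*} [Fintype X] [DecidableEq X] [Fintype Y]
    (Φ : Matrix X X ℂ → Matrix Y Y ℂ) : Matrix (Y × X) (Y × X) ℂ :=
  ∑ j : X, ∑ k : X, (Φ (Matrix.single j k 1)) ⊗ₖ (Matrix.single j k 1)

def IsChannel {X Y : Type*} [Fintype X] [DecidableEq X] [Fintype Y]
    (Φ : Matrix X X ℂ →ₗ[ℂ] Matrix Y Y ℂ) : Prop :=
  (∀ M, (Φ M).trace = M.trace) ∧ (ChoiMatrix (⇑Φ)).PosSemidef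

def SeparableOp {Y Z : Type*} [Fintype Y] [Fintype Z]
    (P : Matrix (Y × Z) (Y × Z) ℂ) : Prop :=
  ∃ (N : ℕ) (Q : Fin N → Matrix Y Y ℂ) (R : Fin N → Matrix Z Z ℂ),
    (∀ i, (Q i).PosSemidef) ∧ (∀ i, (R i).PosSemidef) ∧ P = ∑ i, Q i ⊗ₖ R i

def partialTranspose {Y Z : Type*} (M : Matrix (Y × Z) (Y × Z) ℂ) :
    Matrix (Y × Z) (Y × Z) ℂ :=
  Matrix.of fun p q => M (p.1, q.2) (q.1, p.2)

def IsPPT {Y Z : Type*} [Fintype Y] [Fintype Z] (M : Matrix (Y × Z) (Y × Z) ℂ) : Prop :=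
  M.PosSemidef ∧ (partialTranspose M).PosSemidef

-- Frobenius inner product via EuclideanSpace
noncomputable def matToEuc (d : ℕ) (M : Matrix (Fin d) (Fin d) ℂ) :
    EuclideanSpace ℂ (Fin d × Fin d) := WithLp.toLp 2 (fun p : Fin d × Fin d => M p.1 p.2)

lemma matToEuc_inner (d : ℕ) (A B : Matrix (Fin d) (Fin d) ℂ) :
    (inner ℂ (matToEuc d A) (matToEuc d B) : ℂ) = (Aᴴ * B).trace := by
  simp only [PiLp.inner_apply, RCLike.inner_apply, matToEuc, Matrix.trace, Matrix.diag,
    Matrix.mul_apply, Matrix.conjTranspose_apply, Finset.sum_mul, Finset.mul_sum]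
  rw [Fintype.sum_prod_type, Finset.sum_comm]
  simp [mul_comm]

lemma matToEuc_smul (d : ℕ) (a : ℂ) (A : Matrix (Fin d) (Fin d) ℂ) :
    matToEuc d (a • A) = a • matToEuc d A := rfl


/-- for an orthonormal family of `d² - 1` traceless unitaries `Wⱼ` and a unit
vector `ψ`, `∑ⱼ |⟨ψ, Wⱼ ψ⟩|² = d - 1`. -/
theorem sum_sq_abs_expectation_eq
    (d : ℕ) (hd : 2 ≤ d) (W : Fin (d ^ 2 - 1) → Matrix (Fin d) (Fin d) ℂ)
    (hWunit : ∀ j, (W j)ᴴ * W j = 1)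
    (hWtr : ∀ j, (W j).trace = 0)
    (hWorth : ∀ j k, j ≠ k → ((W j)ᴴ * W k).trace = 0)
    (ψ : Fin d → ℂ) (hψ : star ψ ⬝ᵥ ψ = 1) :
    ∑ j, ‖star ψ ⬝ᵥ (W j).mulVec ψ‖ ^ 2 = (d : ℝ) - 1 := by
  classical
  have hdR : (0:ℝ) < d := by
    have : 0 < d := lt_of_lt_of_le (by norm_num) hd
    exact_mod_cast this
  have hdC : (d:ℂ) ≠ 0 := by exact_mod_cast hdR.ne'
  set c : ℂ := (((Real.sqrt d)⁻¹ : ℝ) : ℂ) with hc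
  have hcc : c * c = (d:ℂ)⁻¹ := by
    have h1 : (Real.sqrt d)⁻¹ * (Real.sqrt d)⁻¹ = ((d:ℝ))⁻¹ := by
      rw [← mul_inv, Real.mul_self_sqrt hdR.le]
    rw [hc, ← Complex.ofReal_mul, h1, Complex.ofReal_inv, Complex.ofReal_natCast]
  have hconjc : (starRingEnd ℂ) c = c := Complex.conj_ofReal _
  -- the orthonormal family
  set v : Option (Fin (d ^ 2 - 1)) → EuclideanSpace ℂ (Fin d × Fin d) :=
    fun o => matToEuc d (c • o.elim 1 W) with hvdef
  have hvinner : ∀ o o', (inner ℂ (v o) (v o') : ℂ)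
      = (d:ℂ)⁻¹ * ((o.elim 1 W)ᴴ * (o'.elim 1 W)).trace := by
    intro o o'
    rw [hvdef]
    simp only [matToEuc_smul, inner_smul_left, inner_smul_right, matToEuc_inner, hconjc]
    rw [← mul_assoc, hcc]
  have hv : Orthonormal ℂ v := by
    rw [orthonormal_iff_ite]
    intro i j
    match i, j with
    | none, none =>
      rw [hvinner]; simp [Matrix.trace_one, hdC]
    | none, some k =>
      simp [hvinner, hWtr k]
    | some j, none =>
      have : (W j)ᴴ.trace = 0 := by
        rw [Matrix.trace_conjTranspose, hWtr j, star_zero]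
      simp [hvinner, this]
    | some j, some k =>
      by_cases h : j = k
      · subst h
        rw [hvinner]; simp [hWunit j, Matrix.trace_one, hdC]
      · simp [hvinner, hWorth j k h, h]
  have hcard : Fintype.card (Option (Fin (d ^ 2 - 1)))
      = Module.finrank ℂ (EuclideanSpace ℂ (Fin d × Fin d)) := by
    rw [finrank_euclideanSpace]
    simp only [Fintype.card_option, Fintype.card_fin, Fintype.card_prod]
    have : 1 ≤ d ^ 2 := one_le_pow_of_one_le' (le_trans (by norm_num) hd) 2
    rw [Nat.sub_add_cancel this, sq]
  let b := basisOfOrthonormalOfCardEqFinrank hv hcard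
  have hb : ⇑b = v := coe_basisOfOrthonormalOfCardEqFinrank hv hcard
  have hbon : Orthonormal ℂ ⇑b := by rwa [hb]
  let ob := b.toOrthonormalBasis hbon
  have hob : ∀ o, ob o = v o := by
    intro o
    show (b.toOrthonormalBasis hbon) o = v o
    rw [Module.Basis.coe_toOrthonormalBasis, hb]
  -- the state
  set P : Matrix (Fin d) (Fin d) ℂ := Matrix.vecMulVec ψ (star ψ) with hP
  have key : ∀ A : Matrix (Fin d) (Fin d) ℂ,
      (Aᴴ * P).trace = (starRingEnd ℂ) (star ψ ⬝ᵥ A.mulVec ψ) := by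
    intro A
    simp only [hP, Matrix.trace, Matrix.diag, Matrix.mul_apply, Matrix.conjTranspose_apply,
      Matrix.vecMulVec_apply, dotProduct, Matrix.mulVec, Pi.star_apply, _root_.map_sum,
      _root_.map_mul, Finset.mul_sum, Finset.sum_mul]
    rw [Finset.sum_comm]
    apply Finset.sum_congr rfl; intro i _
    apply Finset.sum_congr rfl; intro j _
    simp only [Complex.star_def, Complex.conj_conj]
    ring
  set x : EuclideanSpace ℂ (Fin d × Fin d) := matToEuc d P with hx
  have hxx : (inner ℂ x x : ℂ) = 1 := by
    rw [hx, matToEuc_inner, key]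
    have : P.mulVec ψ = ψ := by
      funext i
      simp only [hP, Matrix.mulVec, dotProduct, Matrix.vecMulVec_apply]
      rw [show ∑ j, ψ i * star ψ j * ψ j = ψ i * (star ψ ⬝ᵥ ψ) by
        rw [dotProduct, Finset.mul_sum]; exact Finset.sum_congr rfl fun j _ => by
          simp [Pi.star_apply]; ring]
      rw [hψ, mul_one]
    rw [this, hψ, _root_.map_one]
  have parseval := ob.sum_inner_mul_inner x x
  rw [hxx] at parseval
  -- compute the terms
  have hterm : ∀ o : Option (Fin (d ^ 2 - 1)),
      (inner ℂ x (ob o) : ℂ) * inner ℂ (ob o) x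
        = (d:ℂ)⁻¹ * Complex.normSq ((o.elim 1 W)ᴴ * P).trace := by
    intro o
    rw [hob o, ← inner_conj_symm x (v o)]
    have : (inner ℂ (v o) x : ℂ) = c * ((o.elim 1 W)ᴴ * P).trace := by
      rw [hx, hvdef]
      simp only [matToEuc_smul, inner_smul_left, matToEuc_inner, hconjc]
    rw [this, _root_.map_mul, hconjc]
    set T := ((o.elim 1 W)ᴴ * P).trace with hT
    calc (c * (starRingEnd ℂ) T) * (c * T) = (c * c) * (T * (starRingEnd ℂ) T) := by ring
      _ = (d:ℂ)⁻¹ * Complex.normSq T := by rw [hcc, Complex.mul_conj]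
  rw [Fintype.sum_option] at parseval
  simp only [hterm] at parseval
  have hnone : ((Option.none : Option (Fin (d^2-1))).elim 1 W)ᴴ * P = P := by
    simp [Matrix.conjTranspose_one]
  rw [hnone] at parseval
  have htrP : P.trace = 1 := by
    have := key 1
    rw [Matrix.conjTranspose_one, Matrix.one_mul] at this
    rw [this]
    simp [Matrix.one_mulVec, hψ]
  simp only [key, Complex.normSq_conj] at parseval
  have htr1 : Complex.normSq P.trace = 1 := by rw [htrP]; simp
  rw [htrP] at parseval
  simp only [Complex.normSq_one, Complex.ofReal_one, mul_one] at parseval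
  rw [← Finset.mul_sum] at parseval
  have hS : ((∑ j, Complex.normSq (star ψ ⬝ᵥ (W j).mulVec ψ) : ℝ) : ℂ) = (d:ℂ) - 1 := by
    push_cast
    field_simp at parseval
    simp only [Option.elim_some] at parseval
    linear_combination parseval
  have hR : (∑ j, Complex.normSq (star ψ ⬝ᵥ (W j).mulVec ψ) : ℝ) = (d:ℝ) - 1 := by
    exact_mod_cast hS
  rw [← hR]
  exact Finset.sum_congr rfl fun j _ => Complex.sq_norm _
end

section
/- Let X, Y, Z be finite index types and let Ξ : Matrix X X ℂ →ₗ[ℂ] Matrix Y Y ℂ be a positive (not necessarily completely positive) trace-preserving linear map. Then for every density operator ρ on X × Z and every pair of separable positive semidefinite operators P₀, P₁ on Y × Z with P₀ + P₁ = 1: ⟨P₀ − P₁, (Ξ ⊗ id_Z)(ρ)⟩ ≤ 1. (That is, the separable-measurement distinguishability norm of (Ξ ⊗ id)(ρ) equals 1, as it would for a genuine state, even though (Ξ ⊗ id)(ρ) need not be positive semidefinite.) -/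
open Matrix Kronecker BigOperators ComplexOrder

section Helpers

variable {X Y Z : Type*} [Fintype X] [DecidableEq X] [Fintype Y] [Fintype Z]

lemma psd_trace_nonneg {n : Type*} [Fintype n] [DecidableEq n] {A : Matrix n n ℂ}
    (hA : A.PosSemidef) : 0 ≤ A.trace := by
  rw [Matrix.trace]
  refine Finset.sum_nonneg fun i _ => ?_
  exact hA.diag_nonneg

open scoped MatrixOrder in
lemma psd_exists_sq {n : Type*} [Fintype n] [DecidableEq n] {A : Matrix n n ℂ}
    (hA : A.PosSemidef) : ∃ B : Matrix n n ℂ, A = Bᴴ * B := by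
  obtain ⟨B, hB⟩ := CStarAlgebra.nonneg_iff_eq_star_mul_self.mp hA.nonneg
  exact ⟨B, hB⟩

lemma psd_trace_mul_nonneg {n : Type*} [Fintype n] [DecidableEq n] {A B : Matrix n n ℂ}
    (hA : A.PosSemidef) (hB : B.PosSemidef) : 0 ≤ (Aᴴ * B).trace := by
  obtain ⟨C, rfl⟩ := psd_exists_sq hB
  have h2 : (Aᴴ * (Cᴴ * C)).trace = (C * A * Cᴴ).trace := by
    rw [hA.isHermitian.eq, ← Matrix.mul_assoc, Matrix.trace_mul_comm, ← Matrix.mul_assoc]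
  rw [h2]
  exact (hA.mul_mul_conjTranspose_same C).trace_nonneg

lemma kron_conjTranspose {m n p q : Type*} (A : Matrix m n ℂ) (B : Matrix p q ℂ) :
    (A ⊗ₖ B)ᴴ = Aᴴ ⊗ₖ Bᴴ := by
  ext p q; simp [Matrix.conjTranspose_apply, Matrix.kroneckerMap_apply, mul_comm]

lemma kron_posSemidef {m n : Type*} [Fintype m] [Fintype n] [DecidableEq m] [DecidableEq n]
    {A : Matrix m m ℂ} {B : Matrix n n ℂ} (hA : A.PosSemidef) (hB : B.PosSemidef) :
    (A ⊗ₖ B).PosSemidef := by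
  obtain ⟨A', hA'⟩ := psd_exists_sq hA
  obtain ⟨B', hB'⟩ := psd_exists_sq hB
  have h : A ⊗ₖ B = (A' ⊗ₖ B')ᴴ * (A' ⊗ₖ B') := by
    rw [kron_conjTranspose, ← Matrix.mul_kronecker_mul, ← hA', ← hB']
  rw [h]; exact Matrix.posSemidef_conjTranspose_mul_self _

noncomputable def adjMap (Ξ : Matrix X X ℂ →ₗ[ℂ] Matrix Y Y ℂ) (Q : Matrix Y Y ℂ) :
    Matrix X X ℂ :=
  Matrix.of fun x x' => star ((Qᴴ * Ξ (Matrix.single x x' 1)).trace)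

def subMat (ρ : Matrix (X × Z) (X × Z) ℂ) (x x' : X) : Matrix Z Z ℂ :=
  Matrix.of fun z z' => ρ (x, z) (x', z')

lemma rho_decomp (ρ : Matrix (X × Z) (X × Z) ℂ) :
    ρ = ∑ x : X, ∑ x' : X, (Matrix.single x x' 1) ⊗ₖ subMat ρ x x' := by
  ext ⟨a, z⟩ ⟨a', z'⟩
  simp [Matrix.sum_apply, Matrix.kroneckerMap_apply, Matrix.single, subMat,
    ite_and, Finset.sum_ite_eq, Finset.sum_ite_eq']

lemma tensorId_kron (Ξ : Matrix X X ℂ →ₗ[ℂ] Matrix Y Y ℂ) (A : Matrix X X ℂ)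
    (S : Matrix Z Z ℂ) : tensorId (⇑Ξ) (A ⊗ₖ S) = Ξ A ⊗ₖ S := by
  ext p q
  have h : (Matrix.of fun x x' => (A ⊗ₖ S) (x, p.2) (x', q.2)) = S p.2 q.2 • A := by
    ext x x'; simp [Matrix.kroneckerMap_apply, mul_comm]
  show Ξ (Matrix.of fun x x' => (A ⊗ₖ S) (x, p.2) (x', q.2)) p.1 q.1 = (Ξ A ⊗ₖ S) p q
  rw [h, _root_.map_smul]
  simp [Matrix.kroneckerMap_apply, mul_comm]

lemma tensorId_sum {ι : Type*} (Ξ : Matrix X X ℂ →ₗ[ℂ] Matrix Y Y ℂ) (s : Finset ι)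
    (f : ι → Matrix (X × Z) (X × Z) ℂ) :
    tensorId (⇑Ξ) (∑ i ∈ s, f i) = ∑ i ∈ s, tensorId (⇑Ξ) (f i) := by
  ext p q
  have h : (Matrix.of fun x x' => (∑ i ∈ s, f i) (x, p.2) (x', q.2))
      = ∑ i ∈ s, Matrix.of fun x x' => f i (x, p.2) (x', q.2) := by
    ext x x'; simp [Matrix.sum_apply]
  show Ξ (Matrix.of fun x x' => (∑ i ∈ s, f i) (x, p.2) (x', q.2)) p.1 q.1 = _
  rw [h, map_sum]
  simp [Matrix.sum_apply, tensorId]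

lemma trace_conjTranspose_mul_stdBasis (A : Matrix X X ℂ) (x x' : X) :
    (Aᴴ * Matrix.single x x' 1).trace = star (A x x') := by
  simp [Matrix.trace, Matrix.mul_apply, Matrix.diag, Matrix.single,
    Matrix.conjTranspose_apply, ite_and, Finset.sum_ite_eq, Finset.sum_ite_eq']

/-- decomposition of the pairing with `tensorId` -/
lemma pairing_left (Ξ : Matrix X X ℂ →ₗ[ℂ] Matrix Y Y ℂ) (Q : Matrix Y Y ℂ)
    (R : Matrix Z Z ℂ) (ρ : Matrix (X × Z) (X × Z) ℂ) :
    ((Q ⊗ₖ R)ᴴ * tensorId (⇑Ξ) ρ).trace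
      = ∑ x : X, ∑ x' : X,
          (Qᴴ * Ξ (Matrix.single x x' 1)).trace * (Rᴴ * subMat ρ x x').trace := by
  conv_lhs => rw [rho_decomp ρ, tensorId_sum]
  rw [Matrix.mul_sum, Matrix.trace_sum]
  refine Finset.sum_congr rfl fun x _ => ?_
  rw [tensorId_sum, Matrix.mul_sum, Matrix.trace_sum]
  refine Finset.sum_congr rfl fun x' _ => ?_
  rw [tensorId_kron, kron_conjTranspose, ← Matrix.mul_kronecker_mul, Matrix.trace_kronecker]

lemma pairing_right (Ξ : Matrix X X ℂ →ₗ[ℂ] Matrix Y Y ℂ) (Q : Matrix Y Y ℂ)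
    (R : Matrix Z Z ℂ) (ρ : Matrix (X × Z) (X × Z) ℂ) :
    ((adjMap Ξ Q ⊗ₖ R)ᴴ * ρ).trace
      = ∑ x : X, ∑ x' : X,
          (Qᴴ * Ξ (Matrix.single x x' 1)).trace * (Rᴴ * subMat ρ x x').trace := by
  conv_lhs => rw [rho_decomp ρ]
  rw [Matrix.mul_sum, Matrix.trace_sum]
  refine Finset.sum_congr rfl fun x _ => ?_
  rw [Matrix.mul_sum, Matrix.trace_sum]
  refine Finset.sum_congr rfl fun x' _ => ?_
  rw [kron_conjTranspose, ← Matrix.mul_kronecker_mul, Matrix.trace_kronecker,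
    trace_conjTranspose_mul_stdBasis]
  congr 1
  simp [adjMap]

lemma pairing_eq (Ξ : Matrix X X ℂ →ₗ[ℂ] Matrix Y Y ℂ) (Q : Matrix Y Y ℂ)
    (R : Matrix Z Z ℂ) (ρ : Matrix (X × Z) (X × Z) ℂ) :
    ((Q ⊗ₖ R)ᴴ * tensorId (⇑Ξ) ρ).trace = ((adjMap Ξ Q ⊗ₖ R)ᴴ * ρ).trace := by
  rw [pairing_left, pairing_right]

lemma tensorId_trace (Ξ : Matrix X X ℂ →ₗ[ℂ] Matrix Y Y ℂ)
    (hΞtr : ∀ M : Matrix X X ℂ, (Ξ M).trace = M.trace)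
    (ρ : Matrix (X × Z) (X × Z) ℂ) : (tensorId (⇑Ξ) ρ).trace = ρ.trace := by
  conv_lhs => rw [rho_decomp ρ, tensorId_sum]
  conv_rhs => rw [rho_decomp ρ]
  rw [Matrix.trace_sum, Matrix.trace_sum]
  refine Finset.sum_congr rfl fun x _ => ?_
  rw [tensorId_sum, Matrix.trace_sum, Matrix.trace_sum]
  refine Finset.sum_congr rfl fun x' _ => ?_
  rw [tensorId_kron, Matrix.trace_kronecker, Matrix.trace_kronecker, hΞtr]


lemma map_eq_sum (Ξ : Matrix X X ℂ →ₗ[ℂ] Matrix Y Y ℂ) (M : Matrix X X ℂ) :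
    Ξ M = ∑ x : X, ∑ x' : X, M x x' • Ξ (Matrix.single x x' 1) := by
  conv_lhs => rw [Matrix.matrix_eq_sum_single M]
  rw [map_sum]
  refine Finset.sum_congr rfl fun x _ => ?_
  rw [map_sum]
  refine Finset.sum_congr rfl fun x' _ => ?_
  rw [← _root_.map_smul, Matrix.smul_single, smul_eq_mul, mul_one]

lemma trace_mul_map (Ξ : Matrix X X ℂ →ₗ[ℂ] Matrix Y Y ℂ) (Q : Matrix Y Y ℂ)
    (M : Matrix X X ℂ) :
    (Qᴴ * Ξ M).trace
      = ∑ x : X, ∑ x' : X, M x x' * (Qᴴ * Ξ (Matrix.single x x' 1)).trace := by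
  conv_lhs => rw [map_eq_sum Ξ M]
  rw [Matrix.mul_sum, Matrix.trace_sum]
  refine Finset.sum_congr rfl fun x _ => ?_
  rw [Matrix.mul_sum, Matrix.trace_sum]
  refine Finset.sum_congr rfl fun x' _ => ?_
  rw [Matrix.mul_smul, Matrix.trace_smul, smul_eq_mul]

lemma quad_form (Ξ : Matrix X X ℂ →ₗ[ℂ] Matrix Y Y ℂ) (Q : Matrix Y Y ℂ) (v : X → ℂ) :
    star v ⬝ᵥ (adjMap Ξ Q *ᵥ v)
      = star ((Qᴴ * Ξ (Matrix.vecMulVec v (star v))).trace) := by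
  rw [trace_mul_map]
  simp only [dotProduct, Matrix.mulVec, Matrix.vecMulVec_apply, adjMap,
    Matrix.of_apply, star_sum, star_mul', star_star, Pi.star_apply, Finset.mul_sum]
  refine Finset.sum_congr rfl fun x _ => Finset.sum_congr rfl fun x' _ => ?_
  ring

lemma vecMulVec_star_psd (v : X → ℂ) : (Matrix.vecMulVec v (star v)).PosSemidef := by
  rw [Matrix.vecMulVec_eq Unit, ← Matrix.conjTranspose_replicateCol]
  exact Matrix.posSemidef_self_mul_conjTranspose _

lemma quad_form_nonneg [DecidableEq Y] (Ξ : Matrix X X ℂ →ₗ[ℂ] Matrix Y Y ℂ)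
    (hΞpos : ∀ M : Matrix X X ℂ, M.PosSemidef → (Ξ M).PosSemidef)
    {Q : Matrix Y Y ℂ} (hQ : Q.PosSemidef) (v : X → ℂ) :
    0 ≤ star v ⬝ᵥ (adjMap Ξ Q *ᵥ v) := by
  rw [quad_form]
  have h1 : 0 ≤ (Qᴴ * Ξ (Matrix.vecMulVec v (star v))).trace :=
    psd_trace_mul_nonneg hQ (hΞpos _ (vecMulVec_star_psd v))
  have h2 := (Complex.le_def.mp h1).2
  have h3 : star ((Qᴴ * Ξ (Matrix.vecMulVec v (star v))).trace)
      = (Qᴴ * Ξ (Matrix.vecMulVec v (star v))).trace := by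
    rw [Complex.star_def, Complex.conj_eq_iff_im]; exact h2.symm
  rw [h3]; exact h1

lemma herm_part_psd [DecidableEq Y] (Ξ : Matrix X X ℂ →ₗ[ℂ] Matrix Y Y ℂ)
    (hΞpos : ∀ M : Matrix X X ℂ, M.PosSemidef → (Ξ M).PosSemidef)
    {Q : Matrix Y Y ℂ} (hQ : Q.PosSemidef) :
    ((1/2 : ℂ) • (adjMap Ξ Q + (adjMap Ξ Q)ᴴ)).PosSemidef := by
  refine Matrix.PosSemidef.of_dotProduct_mulVec_nonneg ?_ ?_
  · unfold Matrix.IsHermitian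
    rw [Matrix.conjTranspose_smul, Matrix.conjTranspose_add, Matrix.conjTranspose_conjTranspose]
    rw [add_comm]
    congr 1
    simp
  · intro v
    rw [Matrix.smul_mulVec, Matrix.add_mulVec, dotProduct_smul,
      dotProduct_add]
    have t1 := quad_form_nonneg Ξ hΞpos hQ v
    have t2 : star v ⬝ᵥ ((adjMap Ξ Q)ᴴ *ᵥ v) = star (star v ⬝ᵥ (adjMap Ξ Q *ᵥ v)) := by
      simp only [dotProduct, Matrix.mulVec, Matrix.conjTranspose_apply, star_sum,
        star_mul', star_star, Pi.star_apply, Finset.mul_sum]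
      rw [Finset.sum_comm]
      exact Finset.sum_congr rfl fun x _ => Finset.sum_congr rfl fun x' _ => by ring
    have t3 : star (star v ⬝ᵥ (adjMap Ξ Q *ᵥ v)) = star v ⬝ᵥ (adjMap Ξ Q *ᵥ v) := by
      rw [Complex.star_def, Complex.conj_eq_iff_im]
      exact ((Complex.le_def.mp t1).2).symm
    rw [t2, t3, smul_eq_mul]
    have : (1/2 : ℂ) * (star v ⬝ᵥ (adjMap Ξ Q *ᵥ v) + star v ⬝ᵥ (adjMap Ξ Q *ᵥ v))
        = star v ⬝ᵥ (adjMap Ξ Q *ᵥ v) := by ring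
    rw [this]; exact t1
end Helpers

/-- for a positive trace-preserving map `Ξ`, separable measurements cannot
give a correctness functional exceeding `1` on `(Ξ ⊗ id)(ρ)`. -/
theorem sep_norm_of_positive_map_le_one
    {X Y Z : Type*} [Fintype X] [Fintype Y] [Fintype Z] [DecidableEq Y] [DecidableEq Z]
    (Ξ : Matrix X X ℂ →ₗ[ℂ] Matrix Y Y ℂ)
    (hΞpos : ∀ M : Matrix X X ℂ, M.PosSemidef → (Ξ M).PosSemidef)
    (hΞtr : ∀ M : Matrix X X ℂ, (Ξ M).trace = M.trace)
    (ρ : Matrix (X × Z) (X × Z) ℂ) (hρ : IsDensity ρ)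
    (P₀ P₁ : Matrix (Y × Z) (Y × Z) ℂ)
    (hP₀sep : SeparableOp P₀) (hP₁sep : SeparableOp P₁)
    (hP₀ : P₀.PosSemidef) (hP₁ : P₁.PosSemidef)
    (hmeas : P₀ + P₁ = 1) :
    (((P₀ - P₁)ᴴ * tensorId (⇑Ξ) ρ).trace).re ≤ 1 := by
  classical
  obtain ⟨hρpsd, hρtr⟩ := hρ
  set σ := tensorId (⇑Ξ) ρ with hσ
  have hsplit : P₀ - P₁ = 1 - (P₁ + P₁) := by rw [← hmeas]; abel
  have key : ((P₀ - P₁)ᴴ * σ).trace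
      = (1 : ℂ) - ((P₁ᴴ * σ).trace + (P₁ᴴ * σ).trace) := by
    rw [hsplit, Matrix.conjTranspose_sub, Matrix.conjTranspose_one,
      Matrix.conjTranspose_add, Matrix.sub_mul, Matrix.add_mul, Matrix.one_mul,
      Matrix.trace_sub, Matrix.trace_add, hσ, tensorId_trace Ξ hΞtr, hρtr]
  rw [key]
  -- suffices to show the real part of the P₁ pairing is nonneg
  have hnn : 0 ≤ ((P₁ᴴ * σ).trace).re := by
    obtain ⟨N, Qf, Rf, hQ, hR, hPeq⟩ := hP₁sep
    have h1 : (P₁ᴴ * σ).trace = ∑ i : Fin N, ((Qf i ⊗ₖ Rf i)ᴴ * σ).trace := by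
      rw [hPeq, Matrix.conjTranspose_sum, Matrix.sum_mul, Matrix.trace_sum]
    rw [h1, Complex.re_sum]
    refine Finset.sum_nonneg fun i _ => ?_
    rw [hσ, pairing_eq]
    set A := adjMap Ξ (Qf i) with hA
    set u := ((A ⊗ₖ Rf i)ᴴ * ρ).trace with hu
    have hC : ((1/2 : ℂ) • (A + Aᴴ)).PosSemidef := herm_part_psd Ξ hΞpos (hQ i)
    have hCk : (((1/2 : ℂ) • (A + Aᴴ)) ⊗ₖ Rf i).PosSemidef := kron_posSemidef hC (hR i)
    have hpos : 0 ≤ ((((1/2 : ℂ) • (A + Aᴴ)) ⊗ₖ Rf i)ᴴ * ρ).trace :=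
      psd_trace_mul_nonneg hCk hρpsd
    have hstar : ((Aᴴ ⊗ₖ Rf i)ᴴ * ρ).trace = star u := by
      have e1 : (Aᴴ ⊗ₖ Rf i)ᴴ = A ⊗ₖ Rf i := by
        rw [kron_conjTranspose, Matrix.conjTranspose_conjTranspose, (hR i).isHermitian.eq]
      rw [e1, hu]
      rw [← Matrix.trace_conjTranspose, Matrix.conjTranspose_mul,
        Matrix.conjTranspose_conjTranspose, hρpsd.isHermitian.eq, Matrix.trace_mul_comm]
    have hdecomp : ((((1/2 : ℂ) • (A + Aᴴ)) ⊗ₖ Rf i)ᴴ * ρ).trace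
        = (1/2 : ℂ) * (u + star u) := by
      rw [Matrix.smul_kronecker, Matrix.add_kronecker, Matrix.conjTranspose_smul,
        Matrix.conjTranspose_add, Matrix.smul_mul, Matrix.add_mul, Matrix.trace_smul,
        Matrix.trace_add, hstar, smul_eq_mul, hu]
      norm_num
    have h2 : (1/2 : ℂ) * (u + star u) = (u.re : ℂ) := by
      rw [Complex.star_def, Complex.add_conj]
      push_cast
      ring
    rw [hdecomp, h2] at hpos
    exact_mod_cast hpos
  have hre : ((1 : ℂ) - ((P₁ᴴ * σ).trace + (P₁ᴴ * σ).trace)).re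
      = 1 - (((P₁ᴴ * σ).trace).re + ((P₁ᴴ * σ).trace).re) := by
    simp [Complex.sub_re, Complex.add_re]
  rw [hre]
  linarith
end
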